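/- Let V be a non-empty measurable subset of ℝ^N (N ≥ 1, Lebesgue measure) and β, ζ : ℝ → ℝ continuous nondecreasing functions with β(0) = ζ(0) = 0. Suppose there are measurable functions w_m : V → ℝ (m ∈ ℕ) and functions β̄, ζ̄ ∈ L²(V) such that: β(w_m) → β̄ and ζ(w_m) → ζ̄ weakly in L²(V) (i.e. the integrals against every L²(V) test function converge); and there exists φ ∈ L^∞(V) with φ > 0 a.e. on V such that ∫_V φ(z) β(w_m(z)) ζ(w_m(z)) dz → ∫_V φ(z) β̄(z) ζ̄(z) dz as m → ∞. Then for any measurable function w : V → ℝ satisfying β(w) + ζ(w) = β̄ + ζ̄ a.e. on V, one has β̄ = β(w) and ζ̄ = ζ(w) a.e. on V. -/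

import Mathlib

open MeasureTheory Filter Topology

/-- Minty-like identification lemma: let `β, ζ` be continuous nondecreasing with
`β 0 = ζ 0 = 0`, `β(wₘ) ⇀ β̄` and `ζ(wₘ) ⇀ ζ̄` weakly in `L²(V)`, and suppose
`∫ φ β(wₘ) ζ(wₘ) → ∫ φ β̄ ζ̄` for some `φ ∈ L^∞(V)` with `φ > 0` a.e. Then for any
measurable `w` with `β(w) + ζ(w) = β̄ + ζ̄` a.e., one has `β̄ = β(w)` and `ζ̄ = ζ(w)` a.e. -/
theorem stmt16 (N : ℕ) (hN : 1 ≤ N)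
    (V : Set (EuclideanSpace ℝ (Fin N))) (hVmeas : MeasurableSet V) (hVne : V.Nonempty)
    (β ζ : ℝ → ℝ) (hβc : Continuous β) (hζc : Continuous ζ)
    (hβm : Monotone β) (hζm : Monotone ζ) (hβ0 : β 0 = 0) (hζ0 : ζ 0 = 0)
    (wm : ℕ → EuclideanSpace ℝ (Fin N) → ℝ) (hwm : ∀ m, Measurable (wm m))
    (βbar ζbar : EuclideanSpace ℝ (Fin N) → ℝ)
    (hβbar : MemLp βbar 2 (volume.restrict V)) (hζbar : MemLp ζbar 2 (volume.restrict V))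
    (hβwm : ∀ m, MemLp (fun z => β (wm m z)) 2 (volume.restrict V))
    (hζwm : ∀ m, MemLp (fun z => ζ (wm m z)) 2 (volume.restrict V))
    (hβweak : ∀ g : EuclideanSpace ℝ (Fin N) → ℝ, MemLp g 2 (volume.restrict V) →
      Tendsto (fun m => ∫ z, β (wm m z) * g z ∂(volume.restrict V)) atTop
        (𝓝 (∫ z, βbar z * g z ∂(volume.restrict V))))
    (hζweak : ∀ g : EuclideanSpace ℝ (Fin N) → ℝ, MemLp g 2 (volume.restrict V) →
      Tendsto (fun m => ∫ z, ζ (wm m z) * g z ∂(volume.restrict V)) atTop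
        (𝓝 (∫ z, ζbar z * g z ∂(volume.restrict V))))
    (φ : EuclideanSpace ℝ (Fin N) → ℝ) (hφmem : MemLp φ ⊤ (volume.restrict V))
    (hφpos : ∀ᵐ z ∂(volume.restrict V), 0 < φ z)
    (hprod : Tendsto (fun m => ∫ z, φ z * (β (wm m z) * ζ (wm m z)) ∂(volume.restrict V))
      atTop (𝓝 (∫ z, φ z * (βbar z * ζbar z) ∂(volume.restrict V))))
    (w : EuclideanSpace ℝ (Fin N) → ℝ) (hwmeas : Measurable w)
    (hsum : (fun z => β (w z) + ζ (w z)) =ᵐ[volume.restrict V] fun z => βbar z + ζbar z) :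
    ((fun z => β (w z)) =ᵐ[volume.restrict V] βbar) ∧
      ((fun z => ζ (w z)) =ᵐ[volume.restrict V] ζbar) := by
  set μ := volume.restrict V with hμ
  -- pointwise sign facts
  have hsign : ∀ x : ℝ, |β x| ≤ |β x + ζ x| ∧ |ζ x| ≤ |β x + ζ x| := by
    intro x
    rcases le_total 0 x with hx | hx
    · have h1 : 0 ≤ β x := hβ0 ▸ hβm hx
      have h2 : 0 ≤ ζ x := hζ0 ▸ hζm hx
      rw [abs_of_nonneg h1, abs_of_nonneg h2, abs_of_nonneg (by linarith)]
      constructor <;> linarith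
    · have h1 : β x ≤ 0 := hβ0 ▸ hβm hx
      have h2 : ζ x ≤ 0 := hζ0 ▸ hζm hx
      rw [abs_of_nonpos h1, abs_of_nonpos h2, abs_of_nonpos (by linarith)]
      constructor <;> linarith
  have key0 : ∀ a b : ℝ, 0 ≤ (β a - β b) * (ζ a - ζ b) := by
    intro a b
    rcases le_total a b with h | h
    · nlinarith [hβm h, hζm h]
    · exact mul_nonneg (by linarith [hβm h]) (by linarith [hζm h])
  -- MemLp of β(w), ζ(w)
  have hsum2 : MemLp (fun z => β (w z) + ζ (w z)) 2 μ :=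
    ((hβbar.add hζbar).ae_eq hsum.symm)
  have hfβ : MemLp (fun z => β (w z)) 2 μ := by
    refine hsum2.of_le ((hβc.measurable.comp hwmeas).aestronglyMeasurable) ?_
    filter_upwards with z
    simpa [Real.norm_eq_abs] using (hsign (w z)).1
  have hfζ : MemLp (fun z => ζ (w z)) 2 μ := by
    refine hsum2.of_le ((hζc.measurable.comp hwmeas).aestronglyMeasurable) ?_
    filter_upwards with z
    simpa [Real.norm_eq_abs] using (hsign (w z)).2
  -- integrability of products of L² functions
  have hint : ∀ f g : EuclideanSpace ℝ (Fin N) → ℝ, MemLp f 2 μ → MemLp g 2 μ →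
      Integrable (fun z => f z * g z) μ := by
    intro f g hf hg
    rw [← memLp_one_iff_integrable]
    have := hg.smul hf (p := 2) (q := 2) (r := 1)
    exact this
  -- φ times an L² function is L²
  have hφmul : ∀ f : EuclideanSpace ℝ (Fin N) → ℝ, MemLp f 2 μ →
      MemLp (fun z => φ z * f z) 2 μ := by
    intro f hf
    have := hf.smul hφmem (p := ⊤) (q := 2) (r := 2)
    exact this
  -- expansion identity for integrals
  have expand : ∀ (a c : EuclideanSpace ℝ (Fin N) → ℝ), MemLp a 2 μ → MemLp c 2 μ →
      ∫ z, φ z * ((a z - β (w z)) * (c z - ζ (w z))) ∂μ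
        = ∫ z, φ z * (a z * c z) ∂μ - ∫ z, a z * (φ z * ζ (w z)) ∂μ
          - ∫ z, c z * (φ z * β (w z)) ∂μ + ∫ z, φ z * (β (w z) * ζ (w z)) ∂μ := by
    intro a c ha hc
    have i1 : Integrable (fun z => φ z * (a z * c z)) μ := by
      simpa [mul_assoc] using hint _ _ (hφmul _ ha) hc
    have i2 : Integrable (fun z => a z * (φ z * ζ (w z))) μ := hint _ _ ha (hφmul _ hfζ)
    have i3 : Integrable (fun z => c z * (φ z * β (w z))) μ := hint _ _ hc (hφmul _ hfβ)
    have i4 : Integrable (fun z => φ z * (β (w z) * ζ (w z))) μ := by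
      simpa [mul_assoc] using hint _ _ (hφmul _ hfβ) hfζ
    have i12 : Integrable (fun z => φ z * (a z * c z) - a z * (φ z * ζ (w z))) μ := i1.sub i2
    have i123 : Integrable
        (fun z => φ z * (a z * c z) - a z * (φ z * ζ (w z)) - c z * (φ z * β (w z))) μ :=
      i12.sub i3
    rw [← integral_sub i1 i2, ← integral_sub i12 i3, ← integral_add i123 i4]
    exact integral_congr_ae (Filter.Eventually.of_forall fun z => by simp; ring)
  -- nonnegativity along the sequence
  have hS : ∀ m, 0 ≤ ∫ z, φ z * ((β (wm m z) - β (w z)) * (ζ (wm m z) - ζ (w z))) ∂μ := fun m =>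
    integral_nonneg_of_ae (hφpos.mono fun z hz => mul_nonneg hz.le (key0 _ _))
  -- convergence of the quadratic expression
  have hlim : Tendsto
      (fun m => ∫ z, φ z * ((β (wm m z) - β (w z)) * (ζ (wm m z) - ζ (w z))) ∂μ) atTop
      (𝓝 (∫ z, φ z * ((βbar z - β (w z)) * (ζbar z - ζ (w z))) ∂μ)) := by
    rw [expand βbar ζbar hβbar hζbar]
    refine Tendsto.congr (fun m => (expand _ _ (hβwm m) (hζwm m)).symm) ?_
    exact ((hprod.sub (hβweak _ (hφmul _ hfζ))).sub (hζweak _ (hφmul _ hfβ))).add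
      tendsto_const_nhds
  have hL : 0 ≤ ∫ z, φ z * ((βbar z - β (w z)) * (ζbar z - ζ (w z))) ∂μ :=
    ge_of_tendsto' hlim hS
  -- rewrite the limit as minus a square
  have hae : (fun z => φ z * ((βbar z - β (w z)) * (ζbar z - ζ (w z))))
      =ᵐ[μ] fun z => -(φ z * (βbar z - β (w z)) ^ 2) := by
    filter_upwards [hsum] with z hz
    have hz' : β (w z) + ζ (w z) = βbar z + ζbar z := hz
    linear_combination (-(φ z * (βbar z - β (w z)))) * hz'
  have hInt : Integrable (fun z => φ z * (βbar z - β (w z)) ^ 2) μ := by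
    have h2 : MemLp (fun z => βbar z - β (w z)) 2 μ := hβbar.sub hfβ
    have := hint _ _ (hφmul _ h2) h2
    simpa [sq, mul_assoc] using this
  have hnn : 0 ≤ᵐ[μ] fun z => φ z * (βbar z - β (w z)) ^ 2 :=
    hφpos.mono fun z hz => mul_nonneg hz.le (sq_nonneg _)
  have hzero : ∫ z, φ z * (βbar z - β (w z)) ^ 2 ∂μ = 0 := by
    have hle : ∫ z, φ z * (βbar z - β (w z)) ^ 2 ∂μ ≤ 0 := by
      have := hL
      rw [integral_congr_ae hae, integral_neg] at this
      linarith
    exact le_antisymm hle (integral_nonneg_of_ae hnn)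
  have haez : (fun z => φ z * (βbar z - β (w z)) ^ 2) =ᵐ[μ] 0 :=
    (integral_eq_zero_iff_of_nonneg_ae hnn hInt).mp hzero
  have h1 : (fun z => β (w z)) =ᵐ[μ] βbar := by
    filter_upwards [haez, hφpos] with z h hz
    have h0 : φ z * (βbar z - β (w z)) ^ 2 = 0 := h
    rcases mul_eq_zero.mp h0 with h' | h'
    · exact absurd h' hz.ne'
    · have h'' : βbar z - β (w z) = 0 := by
        have := sq_eq_zero_iff.mp h'
        linarith [this]
      linarith
  refine ⟨h1, ?_⟩
  filter_upwards [hsum, h1] with z hz h1z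
  have hz' : β (w z) + ζ (w z) = βbar z + ζbar z := hz
  have h1z' : β (w z) = βbar z := h1z
  linarith
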